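/- The bivariate quartic polynomial p(x_1, x_2) = x_1⁴ − x_1² + 2x_1 + x_2⁴ − x_2² − 2x_2 + 12/5 − 2x_1x_2 is a sum of squares of polynomials, but p cannot be written as p = s + q where s is a separable polynomial with s(x) ≥ 0 for all x ∈ ℝ² and q is a polynomial of degree at most 2 with q(x) ≥ 0 for all x ∈ ℝ². -/

import Mathlib

open MvPolynomial

/-- A polynomial is a sum of squares. -/
def IsSOS {σ : Type*} (p : MvPolynomial σ ℝ) : Prop :=
  ∃ (m : ℕ) (q : Fin m → MvPolynomial σ ℝ), p = ∑ j, q j ^ 2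

/-- The bivariate quartic polynomial
`x₁⁴ − x₁² + 2x₁ + x₂⁴ − x₂² − 2x₂ + 12/5 − 2x₁x₂`. -/
noncomputable def p3 : MvPolynomial (Fin 2) ℝ :=
  X 0 ^ 4 - X 0 ^ 2 + 2 * X 0 + X 1 ^ 4 - X 1 ^ 2 - 2 * X 1 + C (12 / 5) - 2 * X 0 * X 1

lemma eval_aeval_Xi (P : Polynomial ℝ) (x : Fin 2 → ℝ) (i : Fin 2) :
    eval x (Polynomial.aeval (X i : MvPolynomial (Fin 2) ℝ) P) = P.eval (x i) := by
  have h := Polynomial.aeval_algHom_apply (MvPolynomial.aeval x) (X i : MvPolynomial (Fin 2) ℝ) P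
  simp at h
  rw [h]

/-- quadratic coefficient extraction -/
lemma quad_repr (q : MvPolynomial (Fin 2) ℝ) (h : q.totalDegree ≤ 2) :
    ∃ A B C D E F : ℝ, ∀ a b : ℝ,
      eval ![a, b] q = A * a ^ 2 + B * (a * b) + C * b ^ 2 + D * a + E * b + F := by
  classical
  set Rep : MvPolynomial (Fin 2) ℝ → Prop := fun p =>
    ∃ A B C D E F : ℝ, ∀ a b : ℝ,
      eval ![a, b] p = A * a ^ 2 + B * (a * b) + C * b ^ 2 + D * a + E * b + F with hRep
  have hadd : ∀ p q', Rep p → Rep q' → Rep (p + q') := by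
    rintro p q' ⟨A1, B1, C1, D1, E1, F1, h1⟩ ⟨A2, B2, C2, D2, E2, F2, h2⟩
    exact ⟨A1 + A2, B1 + B2, C1 + C2, D1 + D2, E1 + E2, F1 + F2, fun a b => by
      simp [h1 a b, h2 a b]; ring⟩
  have h0 : Rep 0 := ⟨0, 0, 0, 0, 0, 0, fun a b => by simp⟩
  have hmono : ∀ v ∈ q.support, Rep (monomial v (coeff v q)) := by
    intro v hv
    have hdeg : v 0 + v 1 ≤ 2 := by
      have h1 := (MvPolynomial.le_totalDegree hv).trans h
      rwa [Finsupp.sum_fintype _ _ (fun _ => rfl), Fin.sum_univ_two] at h1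
    set c := coeff v q with hc
    have heval : ∀ a b : ℝ, eval ![a, b] (monomial v c) = c * a ^ v 0 * b ^ v 1 := by
      intro a b
      rw [eval_monomial, Finsupp.prod_fintype _ _ (fun _ => pow_zero _), Fin.prod_univ_two]
      simp [mul_assoc]
    set n := v 0 with hn
    set m := v 1 with hm
    have hn2 : n ≤ 2 := by omega
    interval_cases n
    · have hm2 : m ≤ 2 := by omega
      interval_cases m
      · exact ⟨0, 0, 0, 0, 0, c, fun a b => by rw [heval]; ring⟩
      · exact ⟨0, 0, 0, 0, c, 0, fun a b => by rw [heval]; ring⟩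
      · exact ⟨0, 0, c, 0, 0, 0, fun a b => by rw [heval]; ring⟩
    · have hm2 : m ≤ 1 := by omega
      interval_cases m
      · exact ⟨0, 0, 0, c, 0, 0, fun a b => by rw [heval]; ring⟩
      · exact ⟨0, c, 0, 0, 0, 0, fun a b => by rw [heval]; ring⟩
    · have hm2 : m ≤ 0 := by omega
      interval_cases m
      · exact ⟨c, 0, 0, 0, 0, 0, fun a b => by rw [heval]; ring⟩
  have := Finset.sum_induction _ Rep hadd h0 hmono
  rwa [support_sum_monomial_coeff] at this

noncomputable def ell : Fin 6 → MvPolynomial (Fin 2) ℝ :=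
  ![1 + C (5/12) * X 0 - C (5/12) * X 1 - C (17/48) * X 0 ^ 2 - C (3/16) * (X 0 * X 1)
      - C (17/48) * X 1 ^ 2,
    X 0 - C (8/17) * X 1 + C (5/4) * X 0 ^ 2 - C (55/68) * (X 0 * X 1) - C (15/68) * X 1 ^ 2,
    X 1 + C (187/180) * X 0 ^ 2 + C (11/20) * (X 0 * X 1) - C (313/180) * X 1 ^ 2,
    X 0 ^ 2 + C (9/157) * (X 0 * X 1) - C (67/157) * X 1 ^ 2,
    X 0 * X 1 + C (7/142) * X 1 ^ 2,
    X 1 ^ 2]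

noncomputable def piv : Fin 6 → ℝ :=
  ![12/5, 17/60, 15/68, 157/8640, 71/2355, 21/1420]

theorem sos_but_not_nonneg_sep_plus_nonneg_quad :
    IsSOS p3 ∧
    ¬ ∃ (s : Fin 2 → Polynomial ℝ) (q : MvPolynomial (Fin 2) ℝ),
        q.totalDegree ≤ 2 ∧
        (∀ x : Fin 2 → ℝ, 0 ≤ eval x (∑ i, Polynomial.aeval (MvPolynomial.X i) (s i))) ∧
        (∀ x : Fin 2 → ℝ, 0 ≤ eval x q) ∧
        p3 = (∑ i, Polynomial.aeval (MvPolynomial.X i) (s i)) + q := by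
  constructor
  · refine ⟨6, fun j => C (Real.sqrt (piv j)) * ell j, ?_⟩
    apply MvPolynomial.funext
    intro x
    have key : ∀ r l : ℝ, 0 ≤ r → (Real.sqrt r * l) ^ 2 = r * l ^ 2 := by
      intro r l hr
      rw [mul_pow, Real.sq_sqrt hr]
    simp only [Fin.sum_univ_succ, Finset.sum_empty, Fin.sum_univ_zero, add_zero,
      Matrix.cons_val_zero, Matrix.cons_val_succ, ell, piv,
      map_add, map_mul, map_pow, eval_C, p3, map_sub, eval_X, map_one, map_ofNat]
    rw [key _ _ (by norm_num), key _ _ (by norm_num), key _ _ (by norm_num),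
      key _ _ (by norm_num), key _ _ (by norm_num), key _ _ (by norm_num)]
    ring
  · rintro ⟨s, q, hdeg, hSpos, hQpos, hsum⟩
    obtain ⟨A, B, C', D, E, F, hrep⟩ := quad_repr q hdeg
    -- evaluation of the separable part
    set f : ℝ → ℝ := fun t => (s 0).eval t with hf
    set g : ℝ → ℝ := fun t => (s 1).eval t with hg
    have hEv : ∀ a b : ℝ, a ^ 4 - a ^ 2 + 2 * a + b ^ 4 - b ^ 2 - 2 * b + 12 / 5 - 2 * a * b
        = f a + g b + (A * a ^ 2 + B * (a * b) + C' * b ^ 2 + D * a + E * b + F) := by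
      intro a b
      have h1 := congrArg (eval ![a, b]) hsum
      rw [map_add] at h1
      rw [Fin.sum_univ_two, map_add, eval_aeval_Xi, eval_aeval_Xi] at h1
      simp only [Matrix.cons_val_zero, Matrix.cons_val_one, Matrix.head_cons] at h1
      rw [hrep a b] at h1
      have h2 : eval ![a, b] p3
          = a ^ 4 - a ^ 2 + 2 * a + b ^ 4 - b ^ 2 - 2 * b + 12 / 5 - 2 * a * b := by
        simp [p3]
      rw [h2] at h1
      exact h1
    have hSv : ∀ a b : ℝ, 0 ≤ f a + g b := by
      intro a b
      have h1 := hSpos ![a, b]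
      rw [Fin.sum_univ_two, map_add, eval_aeval_Xi, eval_aeval_Xi] at h1
      simpa using h1
    have hQv : ∀ a b : ℝ,
        0 ≤ A * a ^ 2 + B * (a * b) + C' * b ^ 2 + D * a + E * b + F := by
      intro a b
      have h1 := hQpos ![a, b]
      rwa [hrep a b] at h1
    -- the certificate
    have e00 := hEv 0 0
    have e11 := hEv 1 1
    have e01 := hEv 0 1
    have e10 := hEv 1 0
    have eM1 := hEv (-1) 1
    have eM2 := hEv 1 (-1)
    have q1 := hQv (-5/2) (-3/2)
    have q2 := hQv (-5/4) (-1/4)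
    have q3 := hQv 0 1
    have s1 := hSv (-1) 1
    have s2 := hSv 1 (-1)
    linarith [q1, q2, q3, s1, s2, e00, e11, e01, e10, eM1, eM2]
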